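/- Let γ, ε ∈ ℝ with γ ≠ 0, and assume that every complex root r of the polynomial γ·t² − ε·t + 1 satisfies |r| ≥ 1. If y : ℕ → ℂ is square-summable (∑_{n} |y_n|² < ∞) and satisfies the linear recurrence γ·y_{n+2} − ε·y_{n+1} + y_n = 0 for all n ∈ ℕ, then y_n = 0 for all n. -/

import Mathlib

open Filter Topology

/-- A geometric sequence with ratio of modulus at least 1 tending to zero vanishes. -/
lemma geom_tendsto_zero_eq_zero (r : ℂ) (hr : 1 ≤ ‖r‖) (w : ℕ → ℂ)
    (hw : Filter.Tendsto w Filter.atTop (nhds 0))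
    (hstep : ∀ n, w (n + 1) = r * w n) : ∀ n, w n = 0 := by
  have hform : ∀ n, w n = r ^ n * w 0 := by
    intro n
    induction n with
    | zero => simp
    | succ k ih => rw [hstep k, ih]; ring
  have habs : ∀ n, ‖w 0‖ ≤ ‖w n‖ := by
    intro n
    rw [hform n, norm_mul, norm_pow]
    calc ‖w 0‖ = 1 * ‖w 0‖ := by ring
    _ ≤ ‖r‖ ^ n * ‖w 0‖ := by
        apply mul_le_mul_of_nonneg_right _ (norm_nonneg _)
        exact one_le_pow₀ hr
  have habs_t : Filter.Tendsto (fun n => ‖w n‖) Filter.atTop (nhds 0) := by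
    simpa using hw.norm
  have h0 : ‖w 0‖ ≤ 0 := ge_of_tendsto' habs_t habs
  have hw0 : w 0 = 0 := by
    have := le_antisymm h0 (norm_nonneg _)
    simpa using this
  intro n
  rw [hform n, hw0, mul_zero]

/-- If every complex root of `γt² − εt + 1` has modulus at least `1` (with `γ ≠ 0`), then
every square-summable solution of the recurrence `γ·y_{n+2} − ε·y_{n+1} + y_n = 0`
vanishes identically. -/
theorem square_summable_recurrence_solution_eq_zero (γ ε : ℝ) (hγ : γ ≠ 0)
    (hroots : ∀ r : ℂ, (γ : ℂ) * r ^ 2 - (ε : ℂ) * r + 1 = 0 → 1 ≤ ‖r‖)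
    (y : ℕ → ℂ) (hsum : Summable fun n => ‖y n‖ ^ 2)
    (hrec : ∀ n : ℕ, (γ : ℂ) * y (n + 2) - (ε : ℂ) * y (n + 1) + y n = 0) :
    ∀ n, y n = 0 := by
  have hγ' : (γ : ℂ) ≠ 0 := by exact_mod_cast hγ
  -- square root of the discriminant
  obtain ⟨s, hs⟩ : ∃ s : ℂ, s ^ 2 = (ε : ℂ) ^ 2 - 4 * γ := by
    obtain ⟨s, hs⟩ := Complex.isAlgClosed.exists_pow_nat_eq ((ε : ℂ) ^ 2 - 4 * γ) (n := 2)
      (by norm_num)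
    exact ⟨s, hs⟩
  set r1 : ℂ := ((ε : ℂ) + s) / (2 * γ) with hr1def
  set r2 : ℂ := ((ε : ℂ) - s) / (2 * γ) with hr2def
  have hr1 : (γ : ℂ) * r1 ^ 2 - (ε : ℂ) * r1 + 1 = 0 := by
    rw [hr1def]; field_simp; linear_combination hs
  have hr2 : (γ : ℂ) * r2 ^ 2 - (ε : ℂ) * r2 + 1 = 0 := by
    rw [hr2def]; field_simp; linear_combination hs
  have hsum12 : r1 + r2 = (ε : ℂ) / γ := by
    rw [hr1def, hr2def]; field_simp; ring
  have hprod : r1 * r2 = 1 / γ := by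
    rw [hr1def, hr2def]; field_simp; linear_combination -hs
  -- y tends to zero
  have ht : Filter.Tendsto y Filter.atTop (nhds 0) := by
    have h1 : Filter.Tendsto (fun n => ‖y n‖ ^ 2) Filter.atTop (nhds 0) :=
      hsum.tendsto_atTop_zero
    have h2 : Filter.Tendsto (fun n => ‖y n‖) Filter.atTop (nhds 0) := by
      have h3 := (Real.continuous_sqrt.tendsto 0).comp h1
      rw [Real.sqrt_zero] at h3
      refine h3.congr fun n => ?_
      simp [Function.comp, Real.sqrt_sq (norm_nonneg _)]
    rw [tendsto_zero_iff_norm_tendsto_zero]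
    simpa using h2
  -- the auxiliary sequence
  set z : ℕ → ℂ := fun n => y (n + 1) - r2 * y n with hzdef
  have hsum12' : (γ : ℂ) * (r1 + r2) = ε := by
    rw [hsum12]; field_simp
  have hprod' : (γ : ℂ) * (r1 * r2) = 1 := by
    rw [hprod]; field_simp
  have hzstep : ∀ n, z (n + 1) = r1 * z n := by
    intro n
    have key : (γ : ℂ) * ((y (n + 2) - r2 * y (n + 1)) - r1 * (y (n + 1) - r2 * y n)) = 0 := by
      linear_combination hrec n - y (n + 1) * hsum12' + y n * hprod'
    have := (mul_eq_zero.mp key).resolve_left hγ'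
    show y (n + 2) - r2 * y (n + 1) = r1 * (y (n + 1) - r2 * y n)
    linear_combination this
  have hzt : Filter.Tendsto z Filter.atTop (nhds 0) := by
    have h1 : Filter.Tendsto (fun n => y (n + 1)) Filter.atTop (nhds 0) :=
      ht.comp (Filter.tendsto_add_atTop_nat 1)
    have h2 : Filter.Tendsto (fun n => r2 * y n) Filter.atTop (nhds 0) := by
      simpa using ht.const_mul r2
    simpa using h1.sub h2
  have hz0 : ∀ n, z n = 0 := geom_tendsto_zero_eq_zero r1 (hroots r1 hr1) z hzt hzstep
  have hystep : ∀ n, y (n + 1) = r2 * y n := by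
    intro n
    have := hz0 n
    rw [hzdef] at this
    linear_combination this
  exact geom_tendsto_zero_eq_zero r2 (hroots r2 hr2) y ht hystep
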